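/- (Erdős–Rado theorem) Let κ be an infinite cardinal and let r ≥ 1 be a finite number. Define exp_0(κ) = κ and exp_{m+1}(κ) = 2^{exp_m(κ)}. Let X be a set of cardinality at least (exp_r(κ))⁺ (the cardinal successor of exp_r(κ)), let C be a set of colors of cardinality at most κ, and let f be a function assigning a color in C to every (r+1)-element subset of X. Then there exists a subset H ⊆ X of cardinality κ⁺ that is homogeneous for f, i.e., f is constant on the (r+1)-element subsets of H. -/

import Mathlib

open Cardinal Set
set_option linter.unusedVariables false
set_option linter.unusedSectionVars false
set_option maxHeartbeats 1000000

universe u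

/-- The iterated exponential: `expIter κ 0 = κ` and `expIter κ (m+1) = 2 ^ expIter κ m`. -/
def expIter (κ : Cardinal.{u}) : ℕ → Cardinal.{u}
  | 0 => κ
  | m + 1 => 2 ^ expIter κ m

lemma le_expIter (κ : Cardinal.{u}) (r : ℕ) : κ ≤ expIter κ r := by
  induction r with
  | zero => exact le_rfl
  | succ n ih => exact ih.trans (Cardinal.cantor _).le

lemma aleph0_le_expIter {κ : Cardinal.{u}} (hκ : ℵ₀ ≤ κ) (r : ℕ) : ℵ₀ ≤ expIter κ r :=
  hκ.trans (le_expIter κ r)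

section ER
open scoped Classical

variable {X C : Type u} [Nonempty X] [Nonempty C] (f : Finset X → C) (r : ℕ)

/-- `v` avoids `U` and `f_v` agrees with `φ` on `(r+1)`-subsets of `S`. -/
def Agrees (U S : Set X) (φ : Finset X → C) (v : X) : Prop :=
  v ∉ U ∧ ∀ s : Finset X, ↑s ⊆ S → s.card = r + 1 → f (insert v s) = φ s

noncomputable def wit (U S : Set X) (φ : Finset X → C) : X :=
  if h : ∃ v, Agrees f r U S φ v then h.choose else Classical.arbitrary X

lemma wit_spec {U S : Set X} {φ : Finset X → C} (h : ∃ v, Agrees f r U S φ v) :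
    Agrees f r U S φ (wit f r U S φ) := by
  rw [wit, dif_pos h]; exact h.choose_spec

/-- The `(r+1)`-subsets of `S`. -/
def Dom (S : Set X) : Type u := {s : Finset X // ↑s ⊆ S ∧ s.card = r + 1}

noncomputable def ext0 (S : Set X) (ψ : Dom r S → C) : Finset X → C :=
  fun s => if h : ↑s ⊆ S ∧ s.card = r + 1 then ψ ⟨s, h⟩ else Classical.arbitrary C

lemma mk_dom_le {μ : Cardinal.{u}} {S : Set X} (hμ : ℵ₀ ≤ μ) (hS : #S ≤ μ) :
    #(Dom r S) ≤ μ := by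
  have hinj : Function.Injective (fun s : Dom r S => s.1.subtype (· ∈ S)) := by
    intro s t h
    have hs : (s.1.subtype (· ∈ S)).map (Function.Embedding.subtype _) = s.1 := by
      rw [Finset.subtype_map, Finset.filter_true_of_mem (fun x hx => s.2.1 hx)]
    have ht : (t.1.subtype (· ∈ S)).map (Function.Embedding.subtype _) = t.1 := by
      rw [Finset.subtype_map, Finset.filter_true_of_mem (fun x hx => t.2.1 hx)]
    apply Subtype.ext
    rw [← hs, ← ht]
    simp only at h
    rw [h]
  have h1 : #(Dom r S) ≤ #(Finset ↥S) := mk_le_of_injective hinj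
  refine h1.trans ?_
  rcases finite_or_infinite ↥S with hfin | hinf
  · haveI : Fintype ↥S := Fintype.ofFinite ↥S
    exact ((lt_aleph0_of_finite (Finset ↥S)).le).trans hμ
  · rw [mk_finset_of_infinite]; exact hS

variable (μ : Cardinal.{u})

/-- The set of witnesses added over a base set `U`. -/
noncomputable def addW (U : Set X) : Set X :=
  Set.range fun p : (S : {S : Set X // S ⊆ U ∧ #S ≤ μ}) × (Dom r S.1 → C) =>
    wit f r U p.1.1 (ext0 r p.1.1 p.2)

lemma mk_addW_le {U : Set X} (hμ : ℵ₀ ≤ μ) (hC : #C ≤ μ) (hU : #U ≤ 2 ^ μ) :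
    #(addW f r μ U) ≤ 2 ^ μ := by
  have h2 : (2 : Cardinal) ^ μ ≠ 0 := power_ne_zero _ two_ne_zero
  have h2m : ℵ₀ ≤ (2:Cardinal) ^ μ := hμ.trans (cantor μ).le
  have hpm : ((2 : Cardinal) ^ μ) ^ μ = 2 ^ μ := by
    rw [← power_mul, mul_eq_self hμ]
  refine (mk_range_le).trans ?_
  rw [mk_sigma]
  refine (sum_le_sum _ (fun _ => 2 ^ μ) ?_).trans ?_
  · intro S
    have hd : #(Dom r S.1 → C) = #C ^ #(Dom r S.1) := by
      rw [power_def]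
    rw [hd]
    calc #C ^ #(Dom r S.1) ≤ (2 ^ μ) ^ #(Dom r S.1) :=
          power_le_power_right (hC.trans (cantor μ).le)
      _ ≤ (2 ^ μ) ^ μ := power_le_power_left h2 (mk_dom_le r hμ S.2.2)
      _ = 2 ^ μ := hpm
  · rw [sum_const']
    have hsub : #{S : Set X // S ⊆ U ∧ #S ≤ μ} ≤ 2 ^ μ := by
      refine (mk_bounded_subset_le U μ).trans ?_
      calc max #U ℵ₀ ^ μ ≤ (2 ^ μ) ^ μ :=
            power_le_power_right (max_le hU (hμ.trans (cantor μ).le))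
        _ = 2 ^ μ := hpm
    calc #{S : Set X // S ⊆ U ∧ #S ≤ μ} * 2 ^ μ ≤ 2 ^ μ * 2 ^ μ :=
          mul_le_mul_left hsub _
      _ = 2 ^ μ := mul_eq_self h2m

/-- Transfinite chain of stages, indexed by the canonical well-order of type `(succ μ).ord`. -/
noncomputable def stage : (Order.succ μ).ord.ToType → Set X :=
  (wellFounded_lt (α := (Order.succ μ).ord.ToType)).fix
    (fun i ih =>
      (⋃ j : Set.Iio i, ih j.1 j.2) ∪ addW f r μ (⋃ j : Set.Iio i, ih j.1 j.2))

lemma stage_eq (i : (Order.succ μ).ord.ToType) :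
    stage f r μ i = (⋃ j : Set.Iio i, stage f r μ j.1) ∪
      addW f r μ (⋃ j : Set.Iio i, stage f r μ j.1) := by
  rw [stage, WellFounded.fix_eq]

lemma stage_mono {j i : (Order.succ μ).ord.ToType} (h : j < i) :
    stage f r μ j ⊆ stage f r μ i := by
  rw [stage_eq f r μ i]
  exact subset_union_left.trans' (subset_iUnion_of_subset ⟨j, h⟩ subset_rfl) |>.trans' subset_rfl

lemma mk_Iio_le (hμ : ℵ₀ ≤ μ) (i : (Order.succ μ).ord.ToType) : #(Set.Iio i) ≤ μ :=
  Order.lt_succ_iff.mp (mk_Iio_ord_toType i)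

lemma card_stage (hμ : ℵ₀ ≤ μ) (hC : #C ≤ μ) :
    ∀ i, #(stage f r μ i) ≤ 2 ^ μ := by
  have h2m : ℵ₀ ≤ (2:Cardinal) ^ μ := hμ.trans (cantor μ).le
  intro i
  induction i using (wellFounded_lt (α := (Order.succ μ).ord.ToType)).induction with
  | _ i ih =>
    rw [stage_eq]
    have hU : #(⋃ j : Set.Iio i, stage f r μ j.1) ≤ 2 ^ μ := by
      refine (mk_iUnion_le _).trans ?_
      have hsup : ⨆ j : Set.Iio i, #(stage f r μ j.1) ≤ 2 ^ μ := by
        rcases isEmpty_or_nonempty (Set.Iio i) with he | hne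
        · simp [ciSup_of_empty]
        · exact ciSup_le' fun j => ih j.1 j.2
      calc #(Set.Iio i) * ⨆ j : Set.Iio i, #(stage f r μ j.1) ≤ μ * 2 ^ μ :=
            mul_le_mul' (mk_Iio_le μ hμ i) hsup
        _ ≤ 2 ^ μ * 2 ^ μ := mul_le_mul_left (cantor μ).le _
        _ = 2 ^ μ := mul_eq_self h2m
    refine (mk_union_le _ _).trans ?_
    calc #(⋃ j : Set.Iio i, stage f r μ j.1) + #(addW f r μ (⋃ j : Set.Iio i, stage f r μ j.1))
        ≤ 2 ^ μ + 2 ^ μ := add_le_add hU (mk_addW_le f r μ hμ hC hU)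
      _ = 2 ^ μ := add_eq_self h2m

/-- The closed-off set. -/
noncomputable def afinal : Set X := ⋃ i, stage f r μ i

lemma card_afinal (hμ : ℵ₀ ≤ μ) (hC : #C ≤ μ) : #(afinal f r μ) ≤ 2 ^ μ := by
  have h2m : ℵ₀ ≤ (2:Cardinal) ^ μ := hμ.trans (cantor μ).le
  refine (mk_iUnion_le _).trans ?_
  have hsup : ⨆ i, #(stage f r μ i) ≤ 2 ^ μ := by
    rcases isEmpty_or_nonempty ((Order.succ μ).ord.ToType) with he | hne
    · simp [ciSup_of_empty]
    · exact ciSup_le' fun i => card_stage f r μ hμ hC i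
  calc #((Order.succ μ).ord.ToType) * ⨆ i, #(stage f r μ i) ≤ Order.succ μ * 2 ^ μ := by
        rw [mk_ord_toType]; exact mul_le_mul_right hsup _
    _ ≤ 2 ^ μ * 2 ^ μ :=
        mul_le_mul_left (Order.succ_le_of_lt (cantor μ)) _
    _ = 2 ^ μ := mul_eq_self h2m

lemma closureW (hμ : ℵ₀ ≤ μ) {S : Set X} (hS : S ⊆ afinal f r μ) (hcard : #S ≤ μ)
    {a : X} (ha : a ∉ afinal f r μ) :
    ∃ v ∈ afinal f r μ, v ∉ S ∧ ∀ s : Finset X, ↑s ⊆ S → s.card = r + 1 →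
      f (insert v s) = f (insert a s) := by
  classical
  -- choose stages
  have hst : ∀ x : S, ∃ i, (x : X) ∈ stage f r μ i := fun x => mem_iUnion.mp (hS x.2)
  choose g hg using hst
  -- find an upper bound i for all the stages
  obtain ⟨i, hi⟩ : ∃ i : (Order.succ μ).ord.ToType, ∀ x : S, g x < i := by
    set iso := Ordinal.ToType.mk (o := (Order.succ μ).ord) with hiso
    set t : S → Ordinal.{u} := fun x => (iso.symm (g x)).1 with ht
    have hco : #S < ((Order.succ μ).ord).cof := by
      rw [(isRegular_succ hμ).cof_eq]
      exact hcard.trans_lt (Order.lt_succ μ)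
    have hlim : Order.IsSuccLimit ((Order.succ μ).ord) := isSuccLimit_ord (hμ.trans (Order.le_succ μ))
    have hlt : ∀ x : S, t x < (Order.succ μ).ord := fun x => (iso.symm (g x)).2
    have hsup : (⨆ x : S, t x) < (Order.succ μ).ord := Ordinal.iSup_lt_ord hco hlt
    have hsucc : Order.succ (⨆ x : S, t x) < (Order.succ μ).ord := hlim.succ_lt hsup
    refine ⟨iso ⟨Order.succ (⨆ x : S, t x), hsucc⟩, fun x => ?_⟩
    have h1 : iso.symm (g x) < (⟨Order.succ (⨆ x : S, t x), hsucc⟩ : Set.Iio (Order.succ μ).ord) := by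
      rw [← Subtype.coe_lt_coe]
      exact lt_of_le_of_lt (Ordinal.le_iSup t x) (Order.lt_succ _)
    have h2 := iso.lt_iff_lt.mpr h1
    rwa [OrderIso.apply_symm_apply] at h2
  set U : Set X := ⋃ j : Set.Iio i, stage f r μ j.1 with hUdef
  have hSU : S ⊆ U := by
    intro x hx
    exact mem_iUnion.mpr ⟨⟨g ⟨x, hx⟩, hi ⟨x, hx⟩⟩, hg ⟨x, hx⟩⟩
  have hUA : U ⊆ afinal f r μ := iUnion_subset fun j => subset_iUnion _ j.1
  -- the witness
  set ψ : Dom r S → C := fun s => f (insert a s.1) with hψ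
  have hex : ∃ v, Agrees f r U S (ext0 r S ψ) v := by
    refine ⟨a, fun hmem => ha (hUA hmem), fun s hs hcard' => ?_⟩
    rw [ext0, dif_pos ⟨hs, hcard'⟩]
  have hw := wit_spec f r hex
  refine ⟨wit f r U S (ext0 r S ψ), ?_, fun hmem => hw.1 (hSU hmem), fun s hs hcard' => ?_⟩
  · have : wit f r U S (ext0 r S ψ) ∈ addW f r μ U :=
      ⟨⟨⟨S, hSU, hcard⟩, ψ⟩, rfl⟩
    have : wit f r U S (ext0 r S ψ) ∈ stage f r μ i := by
      rw [stage_eq]; exact Or.inr this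
    exact mem_iUnion.mpr ⟨i, this⟩
  · rw [hw.2 s hs hcard', ext0, dif_pos ⟨hs, hcard'⟩]

variable (a : X)

noncomputable def pick (S : Set X) : X :=
  if h : ∃ v ∈ afinal f r μ, v ∉ S ∧ ∀ s : Finset X, ↑s ⊆ S → s.card = r + 1 →
      f (insert v s) = f (insert a s) then h.choose else Classical.arbitrary X

noncomputable def seqER : (Order.succ μ).ord.ToType → X :=
  (wellFounded_lt (α := (Order.succ μ).ord.ToType)).fix
    (fun i ih => pick f r μ a (Set.range fun j : Set.Iio i => ih j.1 j.2))

lemma seqER_eq (i : (Order.succ μ).ord.ToType) :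
    seqER f r μ a i = pick f r μ a (seqER f r μ a '' Set.Iio i) := by
  show (wellFounded_lt (α := (Order.succ μ).ord.ToType)).fix _ i = _
  rw [WellFounded.fix_eq]
  congr 1
  exact (Set.image_eq_range _ _).symm

lemma seqER_spec (hμ : ℵ₀ ≤ μ) (ha : a ∉ afinal f r μ) (i : (Order.succ μ).ord.ToType) :
    seqER f r μ a i ∈ afinal f r μ ∧ seqER f r μ a i ∉ seqER f r μ a '' Set.Iio i ∧
      ∀ s : Finset X, ↑s ⊆ seqER f r μ a '' Set.Iio i → s.card = r + 1 →
        f (insert (seqER f r μ a i) s) = f (insert a s) := by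
  induction i using (wellFounded_lt (α := (Order.succ μ).ord.ToType)).induction with
  | _ i ih =>
    have hSsub : seqER f r μ a '' Set.Iio i ⊆ afinal f r μ := by
      rintro x ⟨j, hj, rfl⟩
      exact (ih j hj).1
    have hScard : #(seqER f r μ a '' Set.Iio i) ≤ μ :=
      mk_image_le.trans (mk_Iio_le μ hμ i)
    have h := closureW f r μ hμ hSsub hScard ha
    rw [seqER_eq, pick, dif_pos h]
    exact ⟨h.choose_spec.1, h.choose_spec.2.1, h.choose_spec.2.2⟩

lemma seqER_inj (hμ : ℵ₀ ≤ μ) (ha : a ∉ afinal f r μ) :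
    Function.Injective (seqER f r μ a) := by
  intro i j hij
  by_contra hne
  rcases lt_or_gt_of_ne hne with h | h
  · exact (seqER_spec f r μ a hμ ha j).2.1 ⟨i, h, hij⟩
  · exact (seqER_spec f r μ a hμ ha i).2.1 ⟨j, h, hij.symm⟩

end ER

theorem erdosRado : ∀ (r : ℕ) (κ : Cardinal.{u}), ℵ₀ ≤ κ →
    ∀ (X C : Type u), Order.succ (expIter κ r) ≤ #X → #C ≤ κ →
    ∀ f : Finset X → C,
    ∃ H : Set X, Order.succ κ ≤ #H ∧
      ∀ s t : Finset X, ↑s ⊆ H → ↑t ⊆ H → s.card = r + 1 → t.card = r + 1 →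
        f s = f t := by
  intro r
  induction r with
  | zero =>
    intro κ hκ X C hX hC f
    have h2 : #C < (Order.succ κ).ord.cof := by
      rw [(isRegular_succ hκ).cof_eq]
      exact hC.trans_lt (Order.lt_succ κ)
    obtain ⟨c, hc⟩ := infinite_pigeonhole_card (fun x : X => f {x}) (Order.succ κ)
      hX (hκ.trans (Order.le_succ κ)) h2
    refine ⟨(fun x : X => f {x}) ⁻¹' {c}, hc, ?_⟩
    intro s t hs ht hcs hct
    obtain ⟨x, rfl⟩ := Finset.card_eq_one.mp hcs
    obtain ⟨y, rfl⟩ := Finset.card_eq_one.mp hct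
    have hx : f {x} = c := hs (Finset.mem_coe.mpr (Finset.mem_singleton_self x))
    have hy : f {y} = c := ht (Finset.mem_coe.mpr (Finset.mem_singleton_self y))
    rw [hx, hy]
  | succ r ih =>
    intro κ hκ X C hX hC f
    classical
    set μ := expIter κ r with hμdef
    have hμ : ℵ₀ ≤ μ := aleph0_le_expIter hκ r
    have hCμ : #C ≤ μ := hC.trans (le_expIter κ r)
    have hXpos : Order.succ (2 ^ μ) ≤ #X := hX
    haveI : Nonempty X := by
      rw [← mk_ne_zero_iff]
      intro h0
      rw [h0] at hXpos
      exact (Order.succ_le_iff.mp hXpos).not_ge zero_le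
    haveI : Nonempty C := ⟨f ∅⟩
    -- pick a point outside the closed-off set
    have hAcard : #(afinal f r μ) ≤ 2 ^ μ := card_afinal f r μ hμ hCμ
    obtain ⟨a, ha⟩ : ∃ a : X, a ∉ afinal f r μ := by
      by_contra hcon
      push_neg at hcon
      have huniv : (Set.univ : Set X) ⊆ afinal f r μ := fun x _ => hcon x
      have : #X ≤ 2 ^ μ := by
        calc #X = #(Set.univ : Set X) := mk_univ.symm
          _ ≤ #(afinal f r μ) := mk_le_mk_of_subset huniv
          _ ≤ 2 ^ μ := hAcard
      exact (Order.succ_le_iff.mp hXpos).not_ge this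
    set Φ := seqER f r μ a with hΦ
    have hinj : Function.Injective Φ := seqER_inj f r μ a hμ ha
    -- colour the (r+1)-subsets of the index type
    set g : Finset ((Order.succ μ).ord.ToType) → C := fun u => f (insert a (u.image Φ)) with hg
    have hI : Order.succ (expIter κ r) ≤ #((Order.succ μ).ord.ToType) := by
      rw [mk_ord_toType]
    obtain ⟨H', hH'card, hH'hom⟩ := ih κ hκ _ C hI hC g
    refine ⟨Φ '' H', ?_, ?_⟩
    · rw [mk_image_eq_of_injOn _ _ hinj.injOn]
      exact hH'card
    · -- key: computing f on (r+2)-subsets of the image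
      have key : ∀ s' : Finset ((Order.succ μ).ord.ToType), ↑s' ⊆ H' → s'.card = r + 1 + 1 →
          ∃ u : Finset ((Order.succ μ).ord.ToType), ↑u ⊆ H' ∧ u.card = r + 1 ∧
            f (s'.image Φ) = g u := by
        intro s' hs' hcard
        have hne : s'.Nonempty := Finset.card_pos.mp (by omega)
        set i0 := s'.max' hne with hi0
        have hi0mem : i0 ∈ s' := s'.max'_mem hne
        refine ⟨s'.erase i0, ?_, ?_, ?_⟩
        · exact fun x hx => hs' (Finset.erase_subset _ _ hx)
        · rw [Finset.card_erase_of_mem hi0mem, hcard]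
          omega
        · have hsplit : s' = insert i0 (s'.erase i0) := (Finset.insert_erase hi0mem).symm
          have himg : s'.image Φ = insert (Φ i0) ((s'.erase i0).image Φ) := by
            conv_lhs => rw [hsplit]
            rw [Finset.image_insert]
          have hlt : ∀ x ∈ s'.erase i0, x < i0 := fun x hx =>
            Finset.lt_max'_of_mem_erase_max' s' hne hx
          have hsub : ↑((s'.erase i0).image Φ) ⊆ Φ '' Set.Iio i0 := by
            intro y hy
            obtain ⟨x, hx, rfl⟩ := Finset.mem_image.mp hy
            exact ⟨x, hlt x hx, rfl⟩
          have hcard2 : ((s'.erase i0).image Φ).card = r + 1 := by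
            rw [Finset.card_image_of_injective _ hinj, Finset.card_erase_of_mem hi0mem, hcard]
            omega
          have := (seqER_spec f r μ a hμ ha i0).2.2 ((s'.erase i0).image Φ) hsub hcard2
          rw [himg, this]
      -- transfer finsets in the image back to finsets of indices
      have lift : ∀ s : Finset X, ↑s ⊆ Φ '' H' →
          ∃ s' : Finset ((Order.succ μ).ord.ToType), ↑s' ⊆ H' ∧ s'.image Φ = s ∧
            s'.card = s.card := by
        intro s hs
        refine ⟨s.preimage Φ hinj.injOn, ?_, ?_, ?_⟩
        · intro x hx
          have : Φ x ∈ s := Finset.mem_preimage.mp hx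
          obtain ⟨y, hy, hxy⟩ := hs this
          rwa [← hinj hxy]
        · rw [Finset.image_preimage]
          refine Finset.filter_true_of_mem fun x hx => ?_
          obtain ⟨y, _, hxy⟩ := hs hx
          exact ⟨y, hxy⟩
        · have h1 := Finset.image_preimage (f := Φ) (s := s) hinj.injOn
          have h2 : s.filter (fun x => x ∈ Set.range Φ) = s := by
            refine Finset.filter_true_of_mem fun x hx => ?_
            obtain ⟨y, _, hxy⟩ := hs hx
            exact ⟨y, hxy⟩
          rw [← Finset.card_image_of_injective (s.preimage Φ hinj.injOn) hinj, h1, h2]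
      intro s t hs ht hcs hct
      obtain ⟨s', hs'H, hs'img, hs'card⟩ := lift s hs
      obtain ⟨t', ht'H, ht'img, ht'card⟩ := lift t ht
      obtain ⟨us, husH, huscard, husval⟩ := key s' hs'H (by rw [hs'card, hcs])
      obtain ⟨ut, hutH, hutcard, hutval⟩ := key t' ht'H (by rw [ht'card, hct])
      rw [← hs'img, ← ht'img, husval, hutval]
      exact hH'hom us ut husH hutH huscard hutcard

/-- Erdős–Rado: Let `κ` be an infinite cardinal and `r ≥ 1` finite. If `X`
has cardinality at least `(exp_r κ)⁺`, `C` has cardinality at most `κ`, and `f` colours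
the `(r+1)`-element subsets of `X` by colours in `C`, then there is `H ⊆ X` of
cardinality `κ⁺` homogeneous for `f`: `f` is constant on `(r+1)`-element subsets of `H`. -/
theorem stmt_8 {κ : Cardinal.{u}} (hκ : ℵ₀ ≤ κ) (r : ℕ) (hr : 1 ≤ r)
    {X C : Type u} (hX : Order.succ (expIter κ r) ≤ #X) (hC : #C ≤ κ)
    (f : Finset X → C) :
    ∃ H : Set X, #H = Order.succ κ ∧
      ∀ s t : Finset X, ↑s ⊆ H → ↑t ⊆ H → s.card = r + 1 → t.card = r + 1 →
        f s = f t := by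
  obtain ⟨H, hHcard, hHhom⟩ := erdosRado r κ hκ X C hX hC f
  obtain ⟨H0, hH0sub, hH0card⟩ := Cardinal.le_mk_iff_exists_subset.mp hHcard
  exact ⟨H0, hH0card, fun s t hs ht hcs hct =>
    hHhom s t (hs.trans hH0sub) (ht.trans hH0sub) hcs hct⟩
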